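/- Define, for integers n and λ, the polynomial P(n,λ) ∈ ℚ[z] by P(n,λ)(z) = Σ_{k=0}^{λ} φ(n, n−λ+k, k) · z^k if n ≥ λ ≥ 0, and P(n,λ) = 0 otherwise. Then for all integers n ≥ λ ≥ 0: (2n − λ·z)·P(n,λ)(z) + z(z+1)·P(n,λ)′(z) = P(n−1, λ−1)(z) + P(n−1, λ)′(z), as an identity of polynomials in z (equivalently, for all rational z). -/

import Mathlib

/-- Auxiliary array realizing the triangular field `φ` on natural-number indices. -/
def phiN : ℕ → ℕ → ℕ → ℚ
  | 0, j, k => if j = 0 ∧ k = 0 then 1 else 0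
  | n + 1, j, k =>
    if k ≤ j ∧ j ≤ n + 1 then
      ((if _hk : k = 0 then 0 else ((n : ℚ) + 2 - (j : ℚ)) * phiN (n + 1) (j - 1) (k - 1))
        + ((k : ℚ) + 1) * phiN n j (k + 1) + phiN n j k) / (2 * ((n : ℚ) + 1) + (k : ℚ))
    else 0
termination_by n j k => (n, j)

/-- The triangular field `φ(n,j,k)` of rational numbers: `φ(n,j,k) = 0` unless
`0 ≤ k ≤ j ≤ n`, `φ(0,0,0) = 1`, and for `0 ≤ k ≤ j ≤ n` with `(n,j,k) ≠ (0,0,0)`,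
`(2n+k)·φ(n,j,k) = (n-j+1)·φ(n,j-1,k-1) + (k+1)·φ(n-1,j,k+1) + φ(n-1,j,k)`. -/
def phi (n j k : ℤ) : ℚ :=
  if 0 ≤ n ∧ 0 ≤ j ∧ 0 ≤ k then phiN n.toNat j.toNat k.toNat else 0

lemma phiN_zero {n j k : ℕ} (h : ¬(k ≤ j ∧ j ≤ n)) : phiN n j k = 0 := by
  cases n with
  | zero => rw [phiN]; rw [if_neg (by omega)]
  | succ m => rw [phiN]; rw [if_neg h]

lemma phiN_rec (N j k : ℕ) (h : k ≤ j ∧ j ≤ N + 1) :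
    (2 * ((N:ℚ) + 1) + k) * phiN (N+1) j k
      = (if k = 0 then (0:ℚ) else ((N:ℚ) + 2 - (j:ℚ)) * phiN (N+1) (j-1) (k-1))
        + ((k:ℚ)+1) * phiN N j (k+1) + phiN N j k := by
  conv_lhs => rw [phiN]
  rw [if_pos h]
  rw [mul_div_cancel₀]
  · split <;> simp_all
  · positivity

lemma phi_eq {x y z : ℤ} (a b c : ℕ) (hx : x = a) (hy : y = b) (hz : z = c) :
    phi x y z = phiN a b c := by
  subst hx hy hz; simp [phi]

lemma phi_zero {n j k : ℤ} (h : ¬(0 ≤ k ∧ k ≤ j ∧ j ≤ n)) : phi n j k = 0 := by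
  unfold phi
  split
  · exact phiN_zero (by omega)
  · rfl

lemma phi_rec {n j k : ℤ} (hk : 0 ≤ k) (hkj : k ≤ j) (hjn : j ≤ n) :
    (2 * (n:ℚ) + (k:ℚ)) * phi n j k
      = ((n:ℚ) - (j:ℚ) + 1) * phi n (j-1) (k-1) + ((k:ℚ)+1) * phi (n-1) j (k+1)
        + phi (n-1) j k := by
  rcases eq_or_lt_of_le (le_trans hk (le_trans hkj hjn)) with h0 | h1
  · obtain rfl : n = 0 := h0.symm
    obtain rfl : j = 0 := le_antisymm hjn (le_trans hk hkj)
    obtain rfl : k = 0 := le_antisymm hkj hk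
    have z1 : phi 0 (0-1) (0-1) = 0 := phi_zero (by omega)
    have z2 : phi (0-1) 0 (0+1) = 0 := phi_zero (by omega)
    have z3 : phi (0-1) 0 0 = 0 := phi_zero (by omega)
    rw [z1, z2, z3]
    push_cast
    ring
  · lift n to ℕ using (by omega) with nn
    lift j to ℕ using (by omega) with J
    lift k to ℕ using hk with K
    obtain ⟨N, rfl⟩ : ∃ N, nn = N + 1 := ⟨nn - 1, by omega⟩
    have hnat : K ≤ J ∧ J ≤ N + 1 := by constructor <;> omega
    have H := phiN_rec N J K hnat
    rw [phi_eq (N+1) J K (by push_cast; ring) rfl rfl]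
    rw [phi_eq N J (K+1) (by push_cast; ring) rfl (by push_cast; ring)]
    rw [phi_eq N J K (by push_cast; ring) rfl rfl]
    rcases Nat.eq_zero_or_pos K with rfl | hK
    · have z : phi (↑(N+1)) ((J:ℤ) - 1) (((0:ℕ):ℤ) - 1) = 0 := phi_zero (by omega)
      rw [z]
      rw [if_pos rfl] at H
      push_cast at H ⊢
      linarith
    · obtain ⟨K', rfl⟩ : ∃ K', K = K' + 1 := ⟨K - 1, by omega⟩
      rw [phi_eq (N+1) (J-1) K' (by push_cast; ring) (by omega) (by push_cast; ring)]
      rw [if_neg (by omega)] at H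
      simp only [Nat.add_sub_cancel] at H
      push_cast at H ⊢
      linear_combination H

lemma key {n l : ℤ} (h0 : 0 ≤ l) (h1 : l ≤ n) {m : ℤ} (hm : 0 ≤ m) :
    (2*(n:ℚ) + (m:ℚ)) * phi n (n-l+m) m
      = ((l:ℚ) - (m:ℚ) + 1) * phi n (n-l+m-1) (m-1)
        + ((m:ℚ)+1) * phi (n-1) (n-l+m) (m+1) + phi (n-1) (n-l+m) m := by
  by_cases hml : m ≤ l
  · have R := phi_rec (n := n) (j := n-l+m) (k := m) (by omega) (by omega) (by omega)
    push_cast at R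
    linear_combination R
  · rcases eq_or_lt_of_le (by omega : l + 1 ≤ m) with he | hgt
    · rw [phi_zero (n:=n) (j:=n-l+m) (k:=m) (by omega),
         phi_zero (n:=n-1) (j:=n-l+m) (k:=m+1) (by omega),
         phi_zero (n:=n-1) (j:=n-l+m) (k:=m) (by omega)]
      have hq : (m:ℚ) = (l:ℚ) + 1 := by exact_mod_cast congrArg (fun x : ℤ => (x:ℚ)) he.symm
      rw [hq]; ring
    · rw [phi_zero (n:=n) (j:=n-l+m) (k:=m) (by omega),
         phi_zero (n:=n) (j:=n-l+m-1) (k:=m-1) (by omega),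
         phi_zero (n:=n-1) (j:=n-l+m) (k:=m+1) (by omega),
         phi_zero (n:=n-1) (j:=n-l+m) (k:=m) (by omega)]
      ring

open Polynomial in
/-- The generating polynomial `P(n,λ)(z) = ∑_{k=0}^{λ} φ(n, n-λ+k, k)·z^k` for `n ≥ λ ≥ 0`,
and `P(n,λ) = 0` otherwise. -/
noncomputable def P (n l : ℤ) : Polynomial ℚ :=
  if 0 ≤ l ∧ l ≤ n then
    ∑ k ∈ Finset.range (l.toNat + 1), C (phi n (n - l + (k : ℤ)) (k : ℤ)) * X ^ k
  else 0

open Polynomial in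
lemma coeff_P {n l : ℤ} (h0 : 0 ≤ l) (h1 : l ≤ n) (m : ℕ) :
    (P n l).coeff m = phi n (n - l + m) m := by
  rw [P, if_pos ⟨h0, h1⟩, Polynomial.finset_sum_coeff]
  simp only [Polynomial.coeff_C_mul, Polynomial.coeff_X_pow, mul_ite, mul_one, mul_zero]
  rw [Finset.sum_ite_eq (Finset.range (l.toNat + 1)) m]
  split
  · rfl
  · rename_i hmem
    rw [Finset.mem_range] at hmem
    exact (phi_zero (by omega)).symm

open Polynomial in
lemma coeff_P1 {n l : ℤ} (h0 : 0 ≤ l) (h1 : l ≤ n) (m : ℕ) :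
    (P (n-1) (l-1)).coeff m = phi (n-1) (n-l+m) m := by
  by_cases hl : 1 ≤ l
  · rw [coeff_P (by omega) (by omega)]
    congr 2
    ring
  · obtain rfl : l = 0 := by omega
    rw [P, if_neg (by omega)]
    simp only [Polynomial.coeff_zero]
    exact (phi_zero (by omega)).symm

open Polynomial in
lemma coeff_P2 {n l : ℤ} (h0 : 0 ≤ l) (h1 : l ≤ n) (m : ℕ) :
    (P (n-1) l).coeff m = phi (n-1) (n-1-l+m) m := by
  by_cases hl : l ≤ n - 1
  · exact coeff_P h0 hl m
  · obtain rfl : l = n := by omega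
    rw [P, if_neg (by omega)]
    simp only [Polynomial.coeff_zero]
    exact (phi_zero (by omega)).symm

open Polynomial in
/-- The recursive differential equation
`(2n - λz)·P(n,λ)(z) + z(z+1)·P(n,λ)'(z) = P(n-1,λ-1)(z) + P(n-1,λ)'(z)` for `n ≥ λ ≥ 0`. -/
theorem stmt15 (n l : ℤ) (h0 : 0 ≤ l) (h1 : l ≤ n) :
    (C ((2 * n : ℤ) : ℚ) - C ((l : ℤ) : ℚ) * X) * P n l
        + X * (X + 1) * derivative (P n l)
      = P (n - 1) (l - 1) + derivative (P (n - 1) l) := by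
  refine Polynomial.ext fun m => ?_
  have hL : (C ((2 * n : ℤ) : ℚ) - C ((l : ℤ) : ℚ) * X) * P n l
        + X * (X + 1) * derivative (P n l)
      = C ((2 * n : ℤ) : ℚ) * P n l + (-(C ((l : ℤ) : ℚ) * P n l)) * X ^ 1
        + derivative (P n l) * X ^ 2 + derivative (P n l) * X ^ 1 := by ring
  rw [hL]
  simp only [Polynomial.coeff_add, Polynomial.coeff_mul_X_pow', Polynomial.coeff_neg,
    Polynomial.coeff_C_mul, Polynomial.coeff_derivative]
  rcases m with _ | _ | t
  · norm_num
    rw [coeff_P h0 h1, coeff_P1 h0 h1, coeff_P2 h0 h1]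
    have Hk := key h0 h1 (m := 0) le_rfl
    have z : phi n (n - l + 0 - 1) (0 - 1) = 0 := phi_zero (by omega)
    rw [z] at Hk
    push_cast at Hk ⊢
    ring_nf at Hk ⊢
    linear_combination Hk
  · norm_num
    rw [coeff_P h0 h1, coeff_P h0 h1, coeff_P1 h0 h1, coeff_P2 h0 h1]
    have Hk := key h0 h1 (m := 1) (by norm_num)
    push_cast at Hk ⊢
    ring_nf at Hk ⊢
    linear_combination Hk
  · norm_num
    rw [coeff_P h0 h1, coeff_P h0 h1, coeff_P h0 h1, coeff_P1 h0 h1, coeff_P2 h0 h1]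
    have Hk := key h0 h1 (m := (t:ℤ)+2) (by positivity)
    push_cast at Hk ⊢
    ring_nf at Hk ⊢
    linear_combination Hk
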